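/- Verification Theorem, part (iii), first case: If the reverse switching costs of the optimal strategy are integrable, i.e. E[Σ_{k≥1} g_{u*_k u*_{k−1}}(τ*_k,X_{τ*_k})1_{[τ*_k<T]}] < +∞, then the optimal strategy is almost surely finite: P({ω : τ*_n(ω) < T for all n ≥ 1}) = 0. -/

import Mathlib

open MeasureTheory Set Filter
open scoped ENNReal Topology

noncomputable section

namespace Switching

/-- Maximum of `f` over the indices `j ≠ i` (the inter-connected obstacle). -/
def maxNe {m : ℕ} (i : Fin m) (f : Fin m → ℝ) : ℝ :=
  ⨆ j : {j : Fin m // j ≠ i}, f (j : Fin m)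

variable {Ω : Type*}

/-- The payoff functional `∫_t^τ ψ_i(s,X_s) ds + max_{j≠i}(-g_{ij}(τ,X_τ) + Y^j_τ) 1_{[τ<T]}`
appearing in the Snell envelope characterization of the value processes. -/
def reward {k m : ℕ} (T : ℝ) (X : ℝ → Ω → EuclideanSpace ℝ (Fin k))
    (ψ : Fin m → ℝ → EuclideanSpace ℝ (Fin k) → ℝ)
    (g : Fin m → Fin m → ℝ → EuclideanSpace ℝ (Fin k) → ℝ)
    (Y : Fin m → ℝ → Ω → ℝ)
    (i : Fin m) (t : ℝ) (τ : Ω → ℝ) (ω : Ω) : ℝ :=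
  (∫ s in Ioc t (τ ω), ψ i s (X s ω)) +
    indicator {ω' | τ ω' < T}
      (fun ω' => maxNe i fun j => -(g i j (τ ω') (X (τ ω') ω')) + Y j (τ ω') ω') ω

/-- `Y` is the system of Snell-envelope value processes:  for every mode `i` and every
`t ∈ [0,T]`, `Y^i_t` is (a.s.) the least `F_t`-measurable random variable dominating
`E[∫_t^τ ψ_i(s,X_s) ds + max_{j≠i}(-g_{ij}(τ,X_τ)+Y^j_τ) 1_{[τ<T]} | F_t]` over all
stopping times `t ≤ τ ≤ T`. -/
def SnellSystem {m0 : MeasurableSpace Ω} {k m : ℕ} (T : ℝ) (μ : Measure Ω)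
    (ℱ : Filtration ℝ m0) (X : ℝ → Ω → EuclideanSpace ℝ (Fin k))
    (ψ : Fin m → ℝ → EuclideanSpace ℝ (Fin k) → ℝ)
    (g : Fin m → Fin m → ℝ → EuclideanSpace ℝ (Fin k) → ℝ)
    (Y : Fin m → ℝ → Ω → ℝ) : Prop :=
  ∀ i : Fin m, ∀ t ∈ Icc (0 : ℝ) T,
    (∀ τ : Ω → ℝ, IsStoppingTime ℱ (fun ω => (τ ω : WithTop ℝ)) → (∀ ω, τ ω ∈ Icc t T) →
      ∀ᵐ ω ∂μ, (μ[reward T X ψ g Y i t τ | ℱ t]) ω ≤ Y i t ω) ∧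
    (∀ Z : Ω → ℝ, Measurable[ℱ t] Z →
      (∀ τ : Ω → ℝ, IsStoppingTime ℱ (fun ω => (τ ω : WithTop ℝ)) → (∀ ω, τ ω ∈ Icc t T) →
        ∀ᵐ ω ∂μ, (μ[reward T X ψ g Y i t τ | ℱ t]) ω ≤ Z ω) →
      ∀ᵐ ω ∂μ, Y i t ω ≤ Z ω)

/-- An admissible switching strategy: a nondecreasing sequence of `[0,T]`-valued stopping
times `τ_n` (with the convention `τ_0 = 0`) together with `F_{τ_n}`-measurable mode choices
`ξ_n` (`ξ_0` being the initial mode). -/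
structure Strategy {m0 : MeasurableSpace Ω} (T : ℝ) (ℱ : Filtration ℝ m0) (m : ℕ) where
  τ : ℕ → Ω → ℝ
  ξ : ℕ → Ω → Fin m
  τ_zero : ∀ ω, τ 0 ω = 0
  τ_mono : ∀ ω, Monotone fun n => τ n ω
  τ_mem : ∀ n ω, τ n ω ∈ Icc (0 : ℝ) T
  τ_stop : ∀ n, IsStoppingTime ℱ (fun ω => (τ n ω : WithTop ℝ))
  ξ_meas : ∀ n j, ∀ i : ℝ, MeasurableSet[ℱ i] ({ω | ξ n ω = j} ∩ {ω | τ n ω ≤ i})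

variable {m0 : MeasurableSpace Ω} {T : ℝ} {ℱ : Filtration ℝ m0} {k m : ℕ}

/-- The mode indicator process `u_t` of a strategy: `u_t = ξ_n` on `(τ_n, τ_{n+1}]`
(and `u_t = ξ_0` on `[0, τ_1]`). -/
def Strategy.mode (S : Strategy T ℱ m) (t : ℝ) (ω : Ω) : Fin m :=
  S.ξ (sSup {n | S.τ n ω < t}) ω

/-- The `n`-th switching cost `g_{ξ_{n-1} ξ_n}(τ_n, X_{τ_n}) 1_{[τ_n < T]}` (indexed so that
`cost g X n` is the cost of the `(n+1)`-st switch). -/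
def Strategy.cost (S : Strategy T ℱ m)
    (g : Fin m → Fin m → ℝ → EuclideanSpace ℝ (Fin k) → ℝ)
    (X : ℝ → Ω → EuclideanSpace ℝ (Fin k)) (n : ℕ) (ω : Ω) : ℝ :=
  indicator {ω' | S.τ (n + 1) ω' < T}
    (fun ω' => g (S.ξ n ω') (S.ξ (n + 1) ω') (S.τ (n + 1) ω') (X (S.τ (n + 1) ω') ω')) ω

/-- The reverse switching cost `g_{ξ_n ξ_{n-1}}(τ_n, X_{τ_n}) 1_{[τ_n < T]}`. -/
def Strategy.revCost (S : Strategy T ℱ m)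
    (g : Fin m → Fin m → ℝ → EuclideanSpace ℝ (Fin k) → ℝ)
    (X : ℝ → Ω → EuclideanSpace ℝ (Fin k)) (n : ℕ) (ω : Ω) : ℝ :=
  indicator {ω' | S.τ (n + 1) ω' < T}
    (fun ω' => g (S.ξ (n + 1) ω') (S.ξ n ω') (S.τ (n + 1) ω') (X (S.τ (n + 1) ω') ω')) ω

/-- Total switching cost, as an extended nonnegative real (so that infinite total cost is
represented faithfully). -/
def Strategy.costENN (S : Strategy T ℱ m)
    (g : Fin m → Fin m → ℝ → EuclideanSpace ℝ (Fin k) → ℝ)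
    (X : ℝ → Ω → EuclideanSpace ℝ (Fin k)) (ω : Ω) : ℝ≥0∞ :=
  ∑' n : ℕ, ENNReal.ofReal (S.cost g X n ω)

/-- The expected total profit `J(δ,ξ)` of a strategy. -/
def profit (μ : Measure Ω) (X : ℝ → Ω → EuclideanSpace ℝ (Fin k))
    (ψ : Fin m → ℝ → EuclideanSpace ℝ (Fin k) → ℝ)
    (g : Fin m → Fin m → ℝ → EuclideanSpace ℝ (Fin k) → ℝ)
    (S : Strategy T ℱ m) : ℝ :=
  ∫ ω, ((∫ s in Ioc (0 : ℝ) T, ψ (S.mode s ω) s (X s ω)) - ∑' n : ℕ, S.cost g X n ω) ∂μ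

/-- The candidate optimal strategy `(δ*, u*)` built from the value processes `Y`:
`τ*_{n+1}` is the first time after `τ*_n` at which the current value process touches its
inter-connected obstacle (truncated at `T`), and the new mode attains the maximum there. -/
structure OptStrat (T : ℝ) (ℱ : Filtration ℝ m0)
    (X : ℝ → Ω → EuclideanSpace ℝ (Fin k))
    (g : Fin m → Fin m → ℝ → EuclideanSpace ℝ (Fin k) → ℝ)
    (Y : Fin m → ℝ → Ω → ℝ) (i0 : Fin m) extends Strategy T ℱ m where
  start : ∀ ω, ξ 0 ω = i0
  hitting : ∀ n ω, τ (n + 1) ω =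
    min (sInf {s : ℝ | τ n ω ≤ s ∧
      Y (ξ n ω) s ω = maxNe (ξ n ω) fun j => -(g (ξ n ω) j s (X s ω)) + Y j s ω}) T
  switch_ne : ∀ n ω, τ (n + 1) ω < T → ξ (n + 1) ω ≠ ξ n ω
  switch_attain : ∀ n ω, τ (n + 1) ω < T →
    Y (ξ n ω) (τ (n + 1) ω) ω =
      -(g (ξ n ω) (ξ (n + 1) ω) (τ (n + 1) ω) (X (τ (n + 1) ω) ω)) +
        Y (ξ (n + 1) ω) (τ (n + 1) ω) ω

/-- The standing hypotheses of the optimal multi-modes switching problem. -/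
structure Hyps {m0 : MeasurableSpace Ω} {k m : ℕ} (T α : ℝ) (μ : Measure Ω)
    (ℱ : Filtration ℝ m0) (X : ℝ → Ω → EuclideanSpace ℝ (Fin k))
    (ψ : Fin m → ℝ → EuclideanSpace ℝ (Fin k) → ℝ)
    (g : Fin m → Fin m → ℝ → EuclideanSpace ℝ (Fin k) → ℝ)
    (Y : Fin m → ℝ → Ω → ℝ) : Prop where
  prob : IsProbabilityMeasure μ
  right_cont : ∀ t : ℝ, ℱ t = ⨅ s : {s : ℝ // t < s}, ℱ (s : ℝ)
  X_cont : ∀ ω, ContinuousOn (fun t => X t ω) (Icc 0 T)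
  X_adapted : ∀ t : ℝ, Measurable[ℱ t] (X t)
  ψ_cont : ∀ i, ContinuousOn (fun p : ℝ × EuclideanSpace ℝ (Fin k) => ψ i p.1 p.2)
    (Icc 0 T ×ˢ univ)
  g_cont : ∀ i j, ContinuousOn (fun p : ℝ × EuclideanSpace ℝ (Fin k) => g i j p.1 p.2)
    (Icc 0 T ×ˢ univ)
  ψ_int : ∀ i, Integrable (fun ω => ∫ s in Icc (0 : ℝ) T, (ψ i s (X s ω)) ^ 2) μ
  g_int : ∀ i j, Integrable (fun ω => ⨆ t : Icc (0 : ℝ) T, (g i j (t : ℝ) (X (t : ℝ) ω)) ^ 2) μ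
  Y_int : ∀ i, Integrable (fun ω => ⨆ t : Icc (0 : ℝ) T, (Y i (t : ℝ) ω) ^ 2) μ
  g_diag : ∀ i, ∀ t ∈ Icc (0 : ℝ) T, ∀ x, g i i t x = 0
  g_nonneg : ∀ i j, ∀ t ∈ Icc (0 : ℝ) T, ∀ x, 0 ≤ g i j t x
  g_triangle : ∀ i j l, j ≠ i → l ≠ i → l ≠ j → ∀ t ∈ Icc (0 : ℝ) T, ∀ x,
    g i l t x < g i j t x + g j l t x
  g_alpha : ∀ i j, i ≠ j → ∀ t ∈ Icc (0 : ℝ) T, ∀ x, α < g i j t x + g j i t x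
  Y_cont : ∀ i ω, ContinuousOn (fun t => Y i t ω) (Icc 0 T)
  Y_adapted : ∀ i, ∀ t : ℝ, Measurable[ℱ t] (Y i t)
  Y_T : ∀ i ω, Y i T ω = 0
  snell : SnellSystem T μ ℱ X ψ g Y


/-- Shifting indices preserves "frequently" along `atTop` on `ℕ`. -/
private lemma freq_shift {p : ℕ → Prop} {t : ℕ} (h : ∃ᶠ n in atTop, p (n + t)) :
    ∃ᶠ n in atTop, p n := by
  rw [Filter.frequently_atTop] at h ⊢
  intro a
  obtain ⟨b, hb, hpb⟩ := h a
  exact ⟨b + t, le_trans hb (Nat.le_add_right _ _), hpb⟩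

/-- If a switch from mode `i` to mode `j` occurs infinitely often along the optimal
strategy, then at the limit time `t'` of the switching times one has
`g_{ij}(t', X_{t'}) = Y^j_{t'} - Y^i_{t'}`. -/
private lemma pair_limit {X : ℝ → Ω → EuclideanSpace ℝ (Fin k)}
    {ψ : Fin m → ℝ → EuclideanSpace ℝ (Fin k) → ℝ}
    {g : Fin m → Fin m → ℝ → EuclideanSpace ℝ (Fin k) → ℝ}
    {Y : Fin m → ℝ → Ω → ℝ} {i0 : Fin m} {α : ℝ} {μ : Measure Ω}
    (H : Hyps T α μ ℱ X ψ g Y) (S : OptStrat T ℱ X g Y i0)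
    (ω : Ω) (hω : ∀ n : ℕ, S.τ (n + 1) ω < T)
    {t' : ℝ} (ht' : t' ∈ Icc (0 : ℝ) T)
    (hconv : Tendsto (fun n => S.τ n ω) atTop (𝓝 t'))
    {i j : Fin m}
    (hfreq : ∃ᶠ n in atTop, S.ξ n ω = i ∧ S.ξ (n + 1) ω = j) :
    g i j t' (X t' ω) = Y j t' ω - Y i t' ω := by
  obtain ⟨φ, hφ, hp⟩ := Filter.extraction_of_frequently_atTop hfreq
  set u : ℕ → ℝ := fun r => S.τ (φ r + 1) ω with hu_def
  have hφtop : Tendsto (fun r => φ r + 1) atTop atTop :=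
    tendsto_atTop_mono (fun r => le_trans hφ.le_apply (Nat.le_succ _)) tendsto_id
  have hu : Tendsto u atTop (𝓝 t') := hconv.comp hφtop
  have humem : ∀ r, u r ∈ Icc (0 : ℝ) T := fun r => S.τ_mem _ ω
  have key_lim : ∀ f : ℝ → ℝ, ContinuousOn f (Icc 0 T) →
      Tendsto (fun r => f (u r)) atTop (𝓝 (f t')) := by
    intro f hf
    exact ((hf.continuousWithinAt ht').tendsto).comp
      (tendsto_nhdsWithin_of_tendsto_nhds_of_eventually_within u hu
        (Filter.Eventually.of_forall humem))
  have hcg : ContinuousOn (fun t => g i j t (X t ω)) (Icc 0 T) := by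
    have hpair : ContinuousOn (fun t : ℝ => ((t, X t ω) : ℝ × EuclideanSpace ℝ (Fin k)))
        (Icc 0 T) := ContinuousOn.prodMk continuousOn_id (H.X_cont ω)
    exact (H.g_cont i j).comp hpair (fun t ht => ⟨ht, mem_univ _⟩)
  have h1 : Tendsto (fun r => g i j (u r) (X (u r) ω)) atTop (𝓝 (g i j t' (X t' ω))) :=
    key_lim _ hcg
  have h2 : Tendsto (fun r => Y j (u r) ω - Y i (u r) ω) atTop
      (𝓝 (Y j t' ω - Y i t' ω)) :=
    (key_lim _ (H.Y_cont j ω)).sub (key_lim _ (H.Y_cont i ω))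
  have hkey : ∀ r, g i j (u r) (X (u r) ω) = Y j (u r) ω - Y i (u r) ω := by
    intro r
    have ha := S.switch_attain (φ r) ω (hω (φ r))
    obtain ⟨hpi, hpj⟩ := hp r
    rw [hpi, hpj] at ha
    have ha' : Y i (u r) ω = -(g i j (u r) (X (u r) ω)) + Y j (u r) ω := ha
    linarith
  exact tendsto_nhds_unique h1 (h2.congr fun r => (hkey r).symm)

/-- The key pointwise fact: no `ω` can have all switching times strictly before `T`. -/
private lemma no_infinite_switching {X : ℝ → Ω → EuclideanSpace ℝ (Fin k)}
    {ψ : Fin m → ℝ → EuclideanSpace ℝ (Fin k) → ℝ}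
    {g : Fin m → Fin m → ℝ → EuclideanSpace ℝ (Fin k) → ℝ}
    {Y : Fin m → ℝ → Ω → ℝ} {i0 : Fin m} {α : ℝ} {μ : Measure Ω}
    (hα : 0 < α)
    (H : Hyps T α μ ℱ X ψ g Y) (S : OptStrat T ℱ X g Y i0)
    (ω : Ω) (hω : ∀ n : ℕ, S.τ (n + 1) ω < T) : False := by
  -- the limit time
  have hbdd : BddAbove (Set.range fun n => S.τ n ω) := by
    refine ⟨T, ?_⟩
    rintro x ⟨n, rfl⟩
    exact (S.τ_mem n ω).2
  set t' : ℝ := ⨆ n, S.τ n ω with ht'_def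
  have hconv : Tendsto (fun n => S.τ n ω) atTop (𝓝 t') :=
    tendsto_atTop_ciSup (S.τ_mono ω) hbdd
  have ht' : t' ∈ Icc (0 : ℝ) T :=
    ⟨le_trans (S.τ_mem 0 ω).1 (le_ciSup hbdd 0), ciSup_le fun n => (S.τ_mem n ω).2⟩
  -- pigeonhole: a window of `m+1` consecutive modes that repeats infinitely often
  set f : ℕ → (Fin (m + 1) → Fin m) := fun n t => S.ξ (n + (t : ℕ)) ω with hf_def
  obtain ⟨v, hv⟩ := Finite.exists_infinite_fiber f
  have hvfreq : ∃ᶠ n in atTop, f n = v := by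
    rw [Nat.frequently_atTop_iff_infinite]
    exact Set.infinite_coe_iff.mp hv
  -- each edge of the window satisfies the limit identity
  have hedge : ∀ t : ℕ, ∀ ht : t < m,
      g (v ⟨t, by omega⟩) (v ⟨t + 1, by omega⟩) t' (X t' ω) =
        Y (v ⟨t + 1, by omega⟩) t' ω - Y (v ⟨t, by omega⟩) t' ω := by
    intro t ht
    refine pair_limit H S ω hω ht' hconv ?_
    refine freq_shift (t := t) (hvfreq.mono ?_)
    intro n hn
    refine ⟨congrFun hn ⟨t, by omega⟩, congrFun hn ⟨t + 1, by omega⟩⟩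
  -- consecutive modes in the window differ
  obtain ⟨n0, hn0⟩ := hvfreq.exists
  have hne : ∀ t : ℕ, ∀ ht : t < m, v ⟨t + 1, by omega⟩ ≠ v ⟨t, by omega⟩ := by
    intro t ht
    have h1 : v ⟨t, by omega⟩ = S.ξ (n0 + t) ω := (congrFun hn0 ⟨t, by omega⟩).symm
    have h2 : v ⟨t + 1, by omega⟩ = S.ξ (n0 + t + 1) ω :=
      (congrFun hn0 ⟨t + 1, by omega⟩).symm
    rw [h1, h2]
    exact S.switch_ne (n0 + t) ω (hω (n0 + t))
  -- pigeonhole inside the window: a repeated vertex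
  obtain ⟨a, b, hab, hvab⟩ := Fintype.exists_ne_map_eq_of_card_lt v (by simp)
  wlog hlt : (a : ℕ) < (b : ℕ) generalizing a b
  · refine this b a hab.symm hvab.symm ?_
    rcases lt_or_gt_of_ne (fun h : (a : ℕ) = (b : ℕ) => hab (Fin.ext h)) with h | h
    · exact absurd h hlt
    · exact h
  have hBm : (b : ℕ) ≤ m := Nat.lt_succ_iff.mp b.isLt
  -- telescoping sum of edge costs around the closed walk from `a` to `b`
  set A : ℕ := (a : ℕ) with hA_def
  set B : ℕ := (b : ℕ) with hB_def
  have hq_lt : ∀ t : ℕ, t ≤ B - A → A + t < m + 1 := by omega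
  set q : ℕ → ℝ := fun t => Y (v ⟨min (A + t) m, by omega⟩) t' ω with hq_def
  have hsum : ∑ t ∈ Finset.range (B - A), (q (t + 1) - q t) = q (B - A) - q 0 :=
    Finset.sum_range_sub q (B - A)
  have hqB : q (B - A) = Y (v b) t' ω := by
    have : (⟨min (A + (B - A)) m, by omega⟩ : Fin (m + 1)) = b := by
      apply Fin.ext
      simp only
      omega
    rw [hq_def]
    simp only
    rw [this]
  have hq0 : q 0 = Y (v a) t' ω := by
    have : (⟨min (A + 0) m, by omega⟩ : Fin (m + 1)) = a := by
      apply Fin.ext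
      simp only
      omega
    rw [hq_def]
    simp only
    rw [this]
  have hterm : ∀ t : ℕ, ∀ ht : t < B - A,
      q (t + 1) - q t = g (v ⟨A + t, by omega⟩) (v ⟨A + t + 1, by omega⟩) t' (X t' ω) := by
    intro t ht
    have hAt : A + t < m := by omega
    have e1 : (⟨min (A + t) m, by omega⟩ : Fin (m + 1)) = ⟨A + t, by omega⟩ := by
      apply Fin.ext; simp only; omega
    have e2 : (⟨min (A + (t + 1)) m, by omega⟩ : Fin (m + 1)) = ⟨A + t + 1, by omega⟩ := by
      apply Fin.ext; simp only; omega
    rw [hq_def]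
    simp only
    rw [e1, e2, hedge (A + t) hAt]
  have hterm_nonneg : ∀ t ∈ Finset.range (B - A), 0 ≤ q (t + 1) - q t := by
    intro t ht
    rw [Finset.mem_range] at ht
    rw [hterm t ht]
    exact H.g_nonneg _ _ t' ht' _
  have hsum0 : ∑ t ∈ Finset.range (B - A), (q (t + 1) - q t) = 0 := by
    rw [hsum, hqB, hq0, hvab]
    ring
  have hall0 : ∀ t ∈ Finset.range (B - A), q (t + 1) - q t = 0 :=
    (Finset.sum_eq_zero_iff_of_nonneg hterm_nonneg).mp hsum0
  -- `B ≥ A + 2` since consecutive modes differ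
  have hB2 : A + 2 ≤ B := by
    by_contra hc
    have hBA : B = A + 1 := by omega
    have hAm : A < m := by omega
    apply hne A hAm
    have hb' : b = (⟨A + 1, by omega⟩ : Fin (m + 1)) := by
      apply Fin.ext
      show (b : ℕ) = A + 1
      omega
    have ha' : a = (⟨A, by omega⟩ : Fin (m + 1)) := by
      apply Fin.ext
      show (a : ℕ) = A
      omega
    exact (congrArg v hb'.symm).trans (hvab.symm.trans (congrArg v ha'))
  -- the two zero-cost consecutive edges
  have h0 : g (v ⟨A, by omega⟩) (v ⟨A + 1, by omega⟩) t' (X t' ω) = 0 := by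
    have := hall0 0 (Finset.mem_range.mpr (by omega))
    rwa [hterm 0 (by omega)] at this
  have h1 : g (v ⟨A + 1, by omega⟩) (v ⟨A + 1 + 1, by omega⟩) t' (X t' ω) = 0 := by
    have := hall0 1 (Finset.mem_range.mpr (by omega))
    rwa [hterm 1 (by omega)] at this
  have hyx : v ⟨A + 1, by omega⟩ ≠ (v ⟨A, by omega⟩ : Fin m) := hne A (by omega)
  have hzy : v ⟨A + 2, by omega⟩ ≠ (v ⟨A + 1, by omega⟩ : Fin m) := hne (A + 1) (by omega)
  have h1' : g (v ⟨A + 1, by omega⟩) (v ⟨A + 2, by omega⟩) t' (X t' ω) = 0 := h1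
  by_cases hzx : v ⟨A + 2, by omega⟩ = (v ⟨A, by omega⟩ : Fin m)
  · -- 2-cycle: contradicts `g_alpha`
    have halpha := H.g_alpha (v ⟨A, by omega⟩) (v ⟨A + 1, by omega⟩) hyx.symm t' ht' (X t' ω)
    rw [h0] at halpha
    rw [hzx] at h1'
    rw [h1'] at halpha
    linarith
  · -- triangle inequality contradicts nonnegativity
    have htri := H.g_triangle (v ⟨A, by omega⟩) (v ⟨A + 1, by omega⟩) (v ⟨A + 2, by omega⟩)
      hyx hzx hzy t' ht' (X t' ω)
    rw [h0, h1'] at htri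
    have hnn := H.g_nonneg (v ⟨A, by omega⟩) (v ⟨A + 2, by omega⟩) t' ht' (X t' ω)
    linarith

/-- **Verification Theorem, part (iii), first case.**  If the reverse switching costs of the
optimal strategy are integrable, i.e. `E[Σ_{k≥1} g_{u*_k u*_{k-1}}(τ*_k, X_{τ*_k})
1_{[τ*_k<T]}] < ∞`, then the optimal strategy is almost surely finite:
`P({ω : τ*_n(ω) < T for all n ≥ 1}) = 0`. -/
theorem verification_theorem_part_iii_integrable_reverse_costs
    {Ω : Type*} {m0 : MeasurableSpace Ω} {k m : ℕ} {T α : ℝ}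
    {μ : Measure Ω} {ℱ : Filtration ℝ m0}
    {X : ℝ → Ω → EuclideanSpace ℝ (Fin k)}
    {ψ : Fin m → ℝ → EuclideanSpace ℝ (Fin k) → ℝ}
    {g : Fin m → Fin m → ℝ → EuclideanSpace ℝ (Fin k) → ℝ}
    {Y : Fin m → ℝ → Ω → ℝ}
    (hT : 0 < T) (hk : 1 ≤ k) (hm : 2 ≤ m) (hα : 0 < α)
    (H : Hyps T α μ ℱ X ψ g Y)
    (i0 : Fin m) (hi0 : i0 = ⟨0, by omega⟩)
    (S : OptStrat T ℱ X g Y i0)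
    (hrev : ∫⁻ ω, ∑' n : ℕ, ENNReal.ofReal (S.toStrategy.revCost g X n ω) ∂μ < ⊤) :
    μ {ω | ∀ n : ℕ, S.τ (n + 1) ω < T} = 0 := by
  have hempty : {ω | ∀ n : ℕ, S.τ (n + 1) ω < T} = (∅ : Set Ω) := by
    ext ω
    simp only [mem_setOf_eq, mem_empty_iff_false, iff_false]
    intro hω
    exact no_infinite_switching hα H S ω hω
  rw [hempty]
  exact measure_empty

end Switching

end
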